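/- Let C be a linear strict symmetric monoidal category with involutive braiding B, and let r be an infinitesimal braiding, i.e., a natural family of endomorphisms r_{x,y} : x ⊗ y → x ⊗ y satisfying B_{x,y} ∘ r_{y,x} = r_{x,y} ∘ B_{x,y} and r_{x, y⊗z} = r^{12}_{x,y} + r^{13}_{x,z}. Then the 4-term relation holds: [r^{12}_{x,y} + r^{13}_{x,z}, r^{23}_{y,z}] = 0 as endomorphisms of x ⊗ y ⊗ z, for all objects x, y, z. -/

import Mathlib

open CategoryTheory CategoryTheory.MonoidalCategory

namespace Stmt0

variable {k : Type*} [Field k] {C : Type*} [Category C] [MonoidalCategory C]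
  [SymmetricCategory C] [Preadditive C] [CategoryTheory.Linear k C]

/-- `g¹² = g ⊗ id_z` as an endomorphism of `x ⊗ y ⊗ z`. -/
def conj12 {x y z : C} (g : x ⊗ y ⟶ x ⊗ y) : x ⊗ y ⊗ z ⟶ x ⊗ y ⊗ z :=
  (α_ x y z).inv ≫ (g ▷ z) ≫ (α_ x y z).hom

/-- `f¹³ = (id_x ⊗ B_{y,z}) (f ⊗ id_y) (id_x ⊗ B_{z,y})` as an endomorphism of
`x ⊗ y ⊗ z` (for `f : x ⊗ z ⟶ x ⊗ z`). -/
def conj13 {x z : C} (y : C) (f : x ⊗ z ⟶ x ⊗ z) : x ⊗ y ⊗ z ⟶ x ⊗ y ⊗ z :=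
  (x ◁ (β_ y z).hom) ≫ (α_ x z y).inv ≫ (f ▷ y) ≫ (α_ x z y).hom ≫
    (x ◁ (β_ z y).hom)

/-- `h²³ = id_x ⊗ h` as an endomorphism of `x ⊗ y ⊗ z`. -/
def conj23 (x : C) {y z : C} (h : y ⊗ z ⟶ y ⊗ z) : x ⊗ y ⊗ z ⟶ x ⊗ y ⊗ z :=
  x ◁ h

/-- An infinitesimal braiding `r` in a linear symmetric monoidal category
(a natural family `r_{x,y} : x ⊗ y ⟶ x ⊗ y` with `B_{x,y} ∘ r_{y,x} = r_{x,y} ∘ B_{x,y}`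
and `r_{x,y⊗z} = r¹²_{x,y} + r¹³_{x,z}`) satisfies the 4-term relation
`[r¹²_{x,y} + r¹³_{x,z}, r²³_{y,z}] = 0` on `x ⊗ y ⊗ z`. -/
theorem four_term_relation
    (r : ∀ x y : C, x ⊗ y ⟶ x ⊗ y)
    (hnat : ∀ {x x' y y' : C} (f : x ⟶ x') (g : y ⟶ y'),
      (f ⊗ₘ g) ≫ r x' y' = r x y ≫ (f ⊗ₘ g))
    (hsymm : ∀ x y : C, (β_ x y).hom ≫ r y x = r x y ≫ (β_ x y).hom)
    (hlin : ∀ x y z : C,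
      r x (y ⊗ z) = conj12 (r x y) + conj13 y (r x z))
    (x y z : C) :
    (conj12 (r x y) + conj13 y (r x z)) ≫ conj23 x (r y z)
      = conj23 x (r y z) ≫ (conj12 (r x y) + conj13 y (r x z)) := by
  rw [← hlin]
  have h := hnat (𝟙 x) (r y z)
  simpa [conj23, MonoidalCategory.id_tensorHom] using h.symm

end Stmt0
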